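/- Let n be an odd natural number. Then C_{U(n)}(n) = 2^{Ω(n)}; that is: (i) every sequence of length 2^{Ω(n)} in Z_n has a nonempty subsequence of consecutive terms which is a U(n)-weighted zero-sum sequence; and (ii) there exists a sequence of length 2^{Ω(n)} − 1 in Z_n having no nonempty subsequence of consecutive terms which is a U(n)-weighted zero-sum sequence. -/

import Mathlib

/-- A list `L` over `ZMod n` is an `A`-weighted zero-sum sequence if there are weights
`a₁, …, a_k ∈ A` (one per term) with `a₁x₁ + ⋯ + a_kx_k = 0`. -/
def IsWeightedZeroSum {n : ℕ} (A : Set (ZMod n)) (L : List (ZMod n)) : Prop :=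
  ∃ a : List (ZMod n), a.length = L.length ∧ (∀ w ∈ a, w ∈ A) ∧
    (List.zipWith (· * ·) a L).sum = 0

/-- `L` has a nonempty subsequence of consecutive terms which is an
`A`-weighted zero-sum sequence. -/
def HasConsecWZS {n : ℕ} (A : Set (ZMod n)) (L : List (ZMod n)) : Prop :=
  ∃ l₁ l₂ l₃ : List (ZMod n), L = l₁ ++ l₂ ++ l₃ ∧ l₂ ≠ [] ∧ IsWeightedZeroSum A l₂


section ZipHelpers

variable {R S : Type*} [NonAssocSemiring R] [NonAssocSemiring S]

lemma zip_sum_append (a₁ : List R) (L₁ : List R) (a₂ L₂ : List R)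
    (h : a₁.length = L₁.length) :
    (List.zipWith (· * ·) (a₁ ++ a₂) (L₁ ++ L₂)).sum
      = (List.zipWith (· * ·) a₁ L₁).sum + (List.zipWith (· * ·) a₂ L₂).sum := by
  induction a₁ generalizing L₁ with
  | nil => cases L₁ with
    | nil => simp
    | cons x l => simp at h
  | cons w a ih =>
    cases L₁ with
    | nil => simp at h
    | cons x l =>
      simp only [List.cons_append, List.zipWith_cons_cons, List.sum_cons]
      rw [ih l (by simpa using h), add_assoc]

lemma map_zip_sum (g : R →+* S) (a L : List R) :
    g ((List.zipWith (· * ·) a L).sum)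
      = (List.zipWith (· * ·) (a.map g) (L.map g)).sum := by
  induction a generalizing L with
  | nil => simp
  | cons w a ih =>
    cases L with
    | nil => simp
    | cons x l => simp [ih l]

lemma zip_sum_zero_right (a L : List R) (h : ∀ x ∈ L, x = 0) :
    (List.zipWith (· * ·) a L).sum = 0 := by
  induction a generalizing L with
  | nil => simp
  | cons w a ih =>
    cases L with
    | nil => simp
    | cons x l =>
      simp only [List.zipWith_cons_cons, List.sum_cons]
      rw [h x (by simp), ih l (fun y hy => h y (by simp [hy])), mul_zero, add_zero]

lemma zip_sum_one (L : List R) :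
    (List.zipWith (· * ·) (List.replicate L.length 1) L).sum = L.sum := by
  induction L with
  | nil => simp
  | cons x l ih => simp [List.replicate_succ, ih]

end ZipHelpers

section MulHelpers

variable {R : Type*} [CommRing R]

lemma zip_sum_smul_left (c : R) (a L : List R) :
    (List.zipWith (· * ·) (a.map (fun x => c * x)) L).sum
      = c * (List.zipWith (· * ·) a L).sum := by
  induction a generalizing L with
  | nil => simp
  | cons w a ih =>
    cases L with
    | nil => simp
    | cons x l => simp [ih l, mul_add, mul_assoc]

lemma zip_sum_smul_right (c : R) (a L : List R) :
    (List.zipWith (· * ·) a (L.map (fun x => c * x))).sum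
      = c * (List.zipWith (· * ·) a L).sum := by
  induction a generalizing L with
  | nil => simp
  | cons w a ih =>
    cases L with
    | nil => simp
    | cons x l =>
      simp only [List.map_cons, List.zipWith_cons_cons, List.sum_cons, ih l, mul_add]
      ring_nf

end MulHelpers

variable {α : Type*}

def GoodChunk (f : α → Bool) (c : List α) : Prop := c ≠ [] ∧ c.countP f ≠ 1

lemma flatten_map_singleton (l : List α) : (l.map (fun x => [x])).flatten = l := by
  induction l with
  | nil => rfl
  | cons x l ih => simp [ih]

lemma goods_map_singleton (f : α → Bool) (l : List α) (h : l.countP f = 0) :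
    ∀ c ∈ l.map (fun x => [x]), GoodChunk f c := by
  intro c hc
  simp only [List.mem_map] at hc
  obtain ⟨x, hx, rfl⟩ := hc
  refine ⟨by simp, ?_⟩
  have := List.countP_eq_zero.mp h x hx
  simp [List.countP_cons, this]

lemma exists_first_true (f : α → Bool) : ∀ s : List α, s.countP f ≠ 0 →
    ∃ u o v, s = u ++ o :: v ∧ u.countP f = 0 ∧ f o = true := by
  intro s
  induction s with
  | nil => simp
  | cons x r ih =>
    intro h
    by_cases hx : f x
    · exact ⟨[], x, r, by simp, by simp, hx⟩
    · have : r.countP f ≠ 0 := by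
        simp [List.countP_cons, hx] at h ⊢; exact h
      obtain ⟨u, o, v, rfl, hu, ho⟩ := ih this
      exact ⟨x :: u, o, v, by simp, by simp [List.countP_cons, hx, hu], ho⟩

lemma chunk_aux (f : α → Bool) : ∀ (N : ℕ) (s : List α), s.length ≤ N →
    ∃ (cs₁ : List (List α)) (suf₁ : List α) (pre : List α) (cs₂ : List (List α)) (suf₂ : List α),
      s = cs₁.flatten ++ suf₁ ∧ (∀ c ∈ cs₁, GoodChunk f c) ∧
      s = pre ++ cs₂.flatten ++ suf₂ ∧ (∀ c ∈ cs₂, GoodChunk f c) ∧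
      ((pre = [] ∧ s.countP f = 0) ∨ (∃ u o, pre = u ++ [o] ∧ u.countP f = 0 ∧ f o = true)) ∧
      s.length ≤ cs₁.length + cs₂.length + 1 := by
  intro N
  induction N with
  | zero =>
    intro s hs
    have : s = [] := List.length_eq_zero_iff.mp (Nat.le_zero.mp hs)
    subst this
    exact ⟨[], [], [], [], [], by simp, by simp, by simp, by simp, Or.inl ⟨rfl, by simp⟩, by simp⟩
  | succ N IH =>
    intro s hs
    cases s with
    | nil =>
      exact ⟨[], [], [], [], [], by simp, by simp, by simp, by simp, Or.inl ⟨rfl, by simp⟩, by simp⟩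
    | cons x r =>
      simp only [List.length_cons, Nat.succ_le_succ_iff] at hs
      by_cases hfx : f x
      · by_cases hc : r.countP f = 0
        · -- only one "one" in s
          refine ⟨[], x :: r, [x], r.map (fun y => [y]), [], by simp, by simp,
            by simp [flatten_map_singleton], goods_map_singleton f r hc,
            Or.inr ⟨[], x, by simp, by simp, hfx⟩, by simp⟩
        · obtain ⟨u, o', v, rfl, hu, ho'⟩ := exists_first_true f r hc
          have hvN : v.length ≤ N := by
            simp only [List.length_append, List.length_cons] at hs; omega
          obtain ⟨cs₁v, suf₁v, pre_v, cs₂v, suf₂v, e1, g1, e2, g2, hshape, hlen⟩ := IH v hvN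
          have hbig : GoodChunk f (x :: (u ++ [o'])) := by
            refine ⟨by simp, ?_⟩
            simp [List.countP_cons, List.countP_append, hfx, ho', hu]
          rcases hshape with ⟨hpre, hv0⟩ | ⟨u', o'', hpe, hu', ho''⟩
          · -- v has no ones: strong first decomposition, weak second
            refine ⟨(x :: (u ++ [o'])) :: v.map (fun y => [y]), [], [x],
              u.map (fun y => [y]), o' :: v, ?_, ?_, ?_, goods_map_singleton f u hu,
              Or.inr ⟨[], x, by simp, by simp, hfx⟩, ?_⟩
            · simp [flatten_map_singleton]
            · intro c hc'
              rcases List.mem_cons.mp hc' with h | h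
              · exact h ▸ hbig
              · exact goods_map_singleton f v hv0 c (by simpa using h)
            · simp [flatten_map_singleton]
            · simp; omega
          · -- v starts (after zeros) with a one
            refine ⟨(x :: (u ++ [o'])) :: cs₁v, suf₁v, [x],
              u.map (fun y => [y]) ++ (o' :: (u' ++ [o''])) :: cs₂v, suf₂v, ?_, ?_, ?_, ?_,
              Or.inr ⟨[], x, by simp, by simp, hfx⟩, ?_⟩
            · simp only [List.flatten_cons, List.cons_append, List.append_assoc]
              rw [← e1]
              simp
            · intro c hc'
              rcases List.mem_cons.mp hc' with h | h
              · exact h ▸ hbig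
              · exact g1 c h
            · have : v = (u' ++ [o'']) ++ cs₂v.flatten ++ suf₂v := by rw [← hpe]; exact e2
              simp only [List.flatten_append, List.flatten_cons, flatten_map_singleton,
                List.cons_append, List.append_assoc, List.flatten_nil]
              rw [this]; simp
            · intro c hc'
              simp only [List.mem_append, List.mem_cons] at hc'
              rcases hc' with h | h | h
              · exact goods_map_singleton f u hu c (by simpa using h)
              · subst h
                refine ⟨by simp, ?_⟩
                simp [List.countP_cons, List.countP_append, ho', ho'', hu']
              · exact g2 c h
            · simp only [List.length_cons, List.length_append, List.length_map] at *
              omega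
      · -- f x = false
        obtain ⟨cs₁r, suf₁r, pre_r, cs₂r, suf₂r, e1, g1, e2, g2, hshape, hlen⟩ := IH r hs
        have hsx : GoodChunk f [x] := ⟨by simp, by simp [List.countP_cons, hfx]⟩
        rcases hshape with ⟨hpre, hr0⟩ | ⟨u', o'', hpe, hu', ho''⟩
        · subst hpre
          refine ⟨[x] :: cs₁r, suf₁r, [], [x] :: cs₂r, suf₂r, ?_, ?_, ?_, ?_,
            Or.inl ⟨rfl, by simp [List.countP_cons, hfx, hr0]⟩, ?_⟩
          · simp only [List.flatten_cons, List.cons_append, List.append_assoc, List.nil_append]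
            rw [e1]
          · intro c hc'; rcases List.mem_cons.mp hc' with h | h
            · exact h ▸ hsx
            · exact g1 c h
          · rw [List.nil_append] at e2 ⊢
            simp only [List.flatten_cons, List.cons_append, List.append_assoc, List.nil_append]
            rw [e2]
          · intro c hc'; rcases List.mem_cons.mp hc' with h | h
            · exact h ▸ hsx
            · exact g2 c h
          · simp only [List.length_cons] at *; omega
        · refine ⟨[x] :: cs₁r, suf₁r, x :: pre_r, cs₂r, suf₂r, ?_, ?_, ?_, g2,
            Or.inr ⟨x :: u', o'', by simp [hpe], by simp [List.countP_cons, hfx, hu'], ho''⟩, ?_⟩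
          · simp only [List.flatten_cons, List.cons_append, List.append_assoc, List.nil_append]
            rw [e1]
          · intro c hc'; rcases List.mem_cons.mp hc' with h | h
            · exact h ▸ hsx
            · exact g1 c h
          · rw [List.cons_append, List.cons_append, ← e2]
          · simp only [List.length_cons] at *; omega

lemma chunk_final (f : α → Bool) (t : ℕ) (s : List α) (hs : 2 * t ≤ s.length) :
    ∃ (pre : List α) (cs : List (List α)) (suf : List α),
      s = pre ++ cs.flatten ++ suf ∧ (∀ c ∈ cs, GoodChunk f c) ∧ t ≤ cs.length := by
  obtain ⟨cs₁, suf₁, pre, cs₂, suf₂, e1, g1, e2, g2, _, hlen⟩ :=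
    chunk_aux f s.length s le_rfl
  by_cases h : t ≤ cs₁.length
  · exact ⟨[], cs₁, suf₁, by simpa using e1, g1, h⟩
  · exact ⟨pre, cs₂, suf₂, e2, g2, by omega⟩

section ZModHelpers

lemma unit_lift {m n : ℕ} (h : m ∣ n) (hn : n ≠ 0) {d : ZMod m} (hd : IsUnit d) :
    ∃ D : ZMod n, IsUnit D ∧ ZMod.castHom h (ZMod m) D = d := by
  haveI : NeZero n := ⟨hn⟩
  obtain ⟨u, hu⟩ := ZMod.unitsMap_surjective h hd.unit
  refine ⟨(u : ZMod n), u.isUnit, ?_⟩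
  have : ((ZMod.unitsMap h u : (ZMod m)ˣ) : ZMod m) = d := by rw [hu]; rfl
  simpa [ZMod.unitsMap_def] using this

lemma units_list_lift {m n : ℕ} (h : m ∣ n) (hn : n ≠ 0) :
    ∀ d : List (ZMod m), (∀ x ∈ d, IsUnit x) →
    ∃ D : List (ZMod n), D.map (ZMod.castHom h (ZMod m)) = d ∧ ∀ x ∈ D, IsUnit x := by
  intro d
  induction d with
  | nil => exact fun _ => ⟨[], rfl, by simp⟩
  | cons x l ih =>
    intro hd
    obtain ⟨D, hD, hDu⟩ := ih (fun y hy => hd y (by simp [hy]))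
    obtain ⟨X, hXu, hX⟩ := unit_lift h hn (hd x (by simp))
    refine ⟨X :: D, by simp [hX, hD], ?_⟩
    rintro y hy
    rcases List.mem_cons.mp hy with rfl | hy
    exacts [hXu, hDu y hy]

lemma pdiv {p m : ℕ} (hp : p ≠ 0) (hm : m ≠ 0) (X : ZMod (p * m))
    (h : ZMod.castHom (dvd_mul_right p m) (ZMod p) X = 0) :
    ∃ Y : ZMod (p * m), X = (p : ZMod (p * m)) * Y := by
  haveI : NeZero (p * m) := ⟨mul_ne_zero hp hm⟩
  have hv : (X.val : ZMod p) = 0 := by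
    rw [ZMod.natCast_val, ← ZMod.castHom_apply (h := dvd_mul_right p m)]; exact h
  obtain ⟨k, hk⟩ := (ZMod.natCast_eq_zero_iff _ _).mp hv
  refine ⟨(k : ZMod (p * m)), ?_⟩
  have hX : X = ((X.val : ℕ) : ZMod (p * m)) := by rw [ZMod.natCast_val, ZMod.cast_id]
  rw [hX, hk]; push_cast; ring

lemma pkill {p m : ℕ} (hp : p ≠ 0) (hm : m ≠ 0) (Z : ZMod (p * m))
    (h : ZMod.castHom (dvd_mul_left m p) (ZMod m) Z = 0) :
    (p : ZMod (p * m)) * Z = 0 := by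
  haveI : NeZero (p * m) := ⟨mul_ne_zero hp hm⟩
  have hv : (Z.val : ZMod m) = 0 := by
    rw [ZMod.natCast_val, ← ZMod.castHom_apply (h := dvd_mul_left m p)]; exact h
  have hdvd : m ∣ Z.val := (ZMod.natCast_eq_zero_iff _ _).mp hv
  have h3 : ((p * Z.val : ℕ) : ZMod (p * m)) = 0 :=
    (ZMod.natCast_eq_zero_iff _ _).mpr (mul_dvd_mul_left p hdvd)
  calc (p : ZMod (p*m)) * Z = ((p * Z.val : ℕ) : ZMod (p*m)) := by
        push_cast; rw [ZMod.natCast_val, ZMod.cast_id]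
  _ = 0 := h3

lemma pkill' {p m : ℕ} (hp : p ≠ 0) (hm : m ≠ 0) (Z : ZMod (p * m))
    (h : (p : ZMod (p * m)) * Z = 0) :
    ZMod.castHom (dvd_mul_left m p) (ZMod m) Z = 0 := by
  haveI : NeZero (p * m) := ⟨mul_ne_zero hp hm⟩
  have h3 : ((p * Z.val : ℕ) : ZMod (p * m)) = 0 := by
    push_cast; rw [ZMod.natCast_val, ZMod.cast_id]; exact h
  have h2 : (p * m : ℕ) ∣ p * Z.val := (ZMod.natCast_eq_zero_iff _ _).mp h3
  have hdvd : m ∣ Z.val := (Nat.mul_dvd_mul_iff_left (Nat.pos_of_ne_zero hp)).mp h2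
  rw [ZMod.castHom_apply, ← ZMod.natCast_val]
  exact (ZMod.natCast_eq_zero_iff _ _).mpr hdvd

lemma field_solve (p : ℕ) (hp : p.Prime) (hp2 : p ≠ 2) (y z s : ZMod p)
    (hy : y ≠ 0) (hz : z ≠ 0) :
    ∃ α β : ZMod p, IsUnit α ∧ IsUnit β ∧ α * y + β * z = s := by
  haveI : Fact p.Prime := ⟨hp⟩
  have h2 : (2 : ZMod p) ≠ 0 := by
    intro h
    have h' : ((2 : ℕ) : ZMod p) = 0 := by exact_mod_cast h
    have := (ZMod.natCast_eq_zero_iff 2 p).mp h'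
    exact hp2 ((Nat.prime_dvd_prime_iff_eq hp Nat.prime_two).mp this)
  obtain ⟨w, hw0, hws⟩ : ∃ w : ZMod p, w ≠ 0 ∧ w ≠ s := by
    by_cases h1 : s = 1
    · refine ⟨2, h2, ?_⟩
      rw [h1]
      intro h
      have : (1 : ZMod p) = 0 := by linear_combination h
      exact one_ne_zero this
    · exact ⟨1, one_ne_zero, fun h => h1 h.symm⟩
  refine ⟨(s - w) * y⁻¹, w * z⁻¹, ?_, ?_, ?_⟩
  · exact isUnit_iff_ne_zero.mpr
      (mul_ne_zero (sub_ne_zero.mpr (fun h => hws h.symm)) (inv_ne_zero hy))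
  · exact isUnit_iff_ne_zero.mpr (mul_ne_zero hw0 (inv_ne_zero hz))
  · rw [mul_assoc, inv_mul_cancel₀ hy, mul_one, mul_assoc, inv_mul_cancel₀ hz, mul_one]
    ring

lemma zip_sum_pattern {R : Type*} [NonAssocSemiring R] (A B y z : R) (u v w : List R) :
    (List.zipWith (· * ·)
      (List.replicate u.length 1 ++ A :: (List.replicate v.length 1 ++ B :: List.replicate w.length 1))
      (u ++ y :: (v ++ z :: w))).sum
    = u.sum + (A * y + (v.sum + (B * z + w.sum))) := by
  rw [zip_sum_append _ _ _ _ (by simp), zip_sum_one]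
  simp only [List.zipWith_cons_cons, List.sum_cons]
  rw [zip_sum_append _ _ _ _ (by simp), zip_sum_one]
  simp only [List.zipWith_cons_cons, List.sum_cons, zip_sum_one]

end ZModHelpers

lemma chunk_weights {p m : ℕ} (hp : p.Prime) (hp2 : p ≠ 2) (hm : m ≠ 0)
    (C : List (ZMod (p * m)))
    (h : C.countP (fun x => decide (ZMod.castHom (dvd_mul_right p m) (ZMod p) x ≠ 0)) ≠ 1) :
    ∃ a : List (ZMod (p * m)), a.length = C.length ∧ (∀ w ∈ a, IsUnit w) ∧
      ZMod.castHom (dvd_mul_right p m) (ZMod p) (List.zipWith (· * ·) a C).sum = 0 := by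
  set φ := ZMod.castHom (dvd_mul_right p m) (ZMod p) with hφ
  set f : ZMod (p * m) → Bool := fun x => decide (φ x ≠ 0) with hf
  by_cases h0 : C.countP f = 0
  · refine ⟨List.replicate C.length 1, by simp, by simp, ?_⟩
    rw [map_zip_sum]
    apply zip_sum_zero_right
    intro x hx
    simp only [List.mem_map] at hx
    obtain ⟨y, hy, rfl⟩ := hx
    have := List.countP_eq_zero.mp h0 y hy
    simpa [hf] using this
  · obtain ⟨u, y, v, rfl, hu, hy⟩ := exists_first_true f C h0
    have hv : v.countP f ≠ 0 := by
      simp only [List.countP_append, List.countP_cons, hu, hy, if_true] at h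
      omega
    obtain ⟨v₁, z, w, rfl, hv₁, hz⟩ := exists_first_true f v hv
    have hφy : φ y ≠ 0 := of_decide_eq_true hy
    have hφz : φ z ≠ 0 := of_decide_eq_true hz
    set s : ZMod p := -(((u.map φ).sum + (v₁.map φ).sum) + (w.map φ).sum) with hs
    obtain ⟨α, β, hαu, hβu, hαβ⟩ := field_solve p hp hp2 (φ y) (φ z) s hφy hφz
    obtain ⟨A, hAu, hA⟩ := unit_lift (dvd_mul_right p m) (mul_ne_zero hp.ne_zero hm) hαu
    obtain ⟨B, hBu, hB⟩ := unit_lift (dvd_mul_right p m) (mul_ne_zero hp.ne_zero hm) hβu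
    refine ⟨List.replicate u.length 1 ++ A :: (List.replicate v₁.length 1 ++ B :: List.replicate w.length 1),
      by simp, ?_, ?_⟩
    · intro x hx
      simp only [List.mem_append, List.mem_cons, List.mem_replicate] at hx
      rcases hx with h' | h' | h' | h'
      · rw [h'.2]; exact isUnit_one
      · rw [h']; exact hAu
      · rw [h'.2]; exact isUnit_one
      · rcases h' with h' | h'
        · rw [h']; exact hBu
        · rw [h'.2]; exact isUnit_one
    · rw [map_zip_sum]
      simp only [List.map_append, List.map_cons, List.map_replicate, map_one]
      have := zip_sum_pattern (R := ZMod p) (φ A) (φ B) (φ y) (φ z) (u.map φ) (v₁.map φ) (w.map φ)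
      simp only [List.length_map] at this
      rw [this, hA, hB]
      linear_combination hαβ

lemma pick_forall₂ {α β : Type*} (P : α → β → Prop) :
    ∀ l : List α, (∀ c ∈ l, ∃ q, P c q) → ∃ qs : List β, List.Forall₂ P l qs := by
  intro l
  induction l with
  | nil => exact fun _ => ⟨[], List.Forall₂.nil⟩
  | cons c l ih =>
    intro h
    obtain ⟨qs, hqs⟩ := ih (fun x hx => h x (List.mem_cons_of_mem _ hx))
    obtain ⟨q, hq⟩ := h c (List.mem_cons_self)
    exact ⟨q :: qs, List.Forall₂.cons hq hqs⟩

lemma map_eq_append_split {α β : Type*} (f : α → β) :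
    ∀ (l : List α) (A B : List β), l.map f = A ++ B →
      ∃ l₁ l₂, l = l₁ ++ l₂ ∧ l₁.map f = A ∧ l₂.map f = B := by
  intro l
  induction l with
  | nil =>
    intro A B h
    rw [List.map_nil] at h
    obtain ⟨hA, hB⟩ := List.append_eq_nil_iff.mp h.symm
    exact ⟨[], [], by simp, by simp [hA], by simp [hB]⟩
  | cons x l ih =>
    intro A B h
    cases A with
    | nil => exact ⟨[], x :: l, by simp, rfl, by simpa using h⟩
    | cons a A' =>
      rw [List.map_cons, List.cons_append] at h
      injection h with h1 h2
      obtain ⟨l₁, l₂, rfl, hl₁, hl₂⟩ := ih A' B h2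
      exact ⟨x :: l₁, l₂, by simp, by simp [h1, hl₁], hl₂⟩

lemma forall₂_append_split {α β : Type*} {P : α → β → Prop} :
    ∀ {A B : List β} {cs : List α}, List.Forall₂ P cs (A ++ B) →
      ∃ cs₁ cs₂, cs = cs₁ ++ cs₂ ∧ List.Forall₂ P cs₁ A ∧ List.Forall₂ P cs₂ B := by
  intro A
  induction A with
  | nil => exact fun {B cs} h => ⟨[], cs, by simp, List.Forall₂.nil, by simpa using h⟩
  | cons a A' ih =>
    intro B cs h
    rw [List.cons_append] at h
    cases h with
    | cons hca h' =>
      obtain ⟨cs₁, cs₂, rfl, h₁, h₂⟩ := ih h'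
      exact ⟨_ :: cs₁, cs₂, by simp, List.Forall₂.cons hca h₁, h₂⟩

lemma assemble {R : Type*} [CommRing R] (pc : R) :
    ∀ (cs : List (List R)) (qs : List (List R × R)),
      List.Forall₂ (fun c q => q.1.length = c.length ∧ (∀ x ∈ q.1, IsUnit x) ∧
        (List.zipWith (· * ·) q.1 c).sum = pc * q.2) cs qs →
      ∀ Ds : List R, Ds.length = cs.length → (∀ x ∈ Ds, IsUnit x) →
      ((List.zipWith (fun D q => q.1.map (fun x => D * x)) Ds qs).flatten.length
          = cs.flatten.length) ∧
      (∀ w ∈ (List.zipWith (fun D q => q.1.map (fun x => D * x)) Ds qs).flatten, IsUnit w) ∧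
      (List.zipWith (· * ·) (List.zipWith (fun D q => q.1.map (fun x => D * x)) Ds qs).flatten
          cs.flatten).sum = pc * (List.zipWith (· * ·) Ds (qs.map Prod.snd)).sum := by
  intro cs qs hF
  induction hF with
  | nil => intro Ds _ _; simp
  | @cons c q cs' qs' hq hF ih =>
    intro Ds hlen hDu
    cases Ds with
    | nil => simp at hlen
    | cons D Ds' =>
      obtain ⟨hql, hqu, hqs⟩ := hq
      have hlen' : Ds'.length = cs'.length := by simpa using hlen
      obtain ⟨ihl, ihu, ihs⟩ := ih Ds' hlen' (fun x hx => hDu x (by simp [hx]))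
      refine ⟨?_, ?_, ?_⟩
      · simp only [List.zipWith_cons_cons, List.flatten_cons, List.length_append,
          List.length_map, hql, ihl]
      · intro x hx
        simp only [List.zipWith_cons_cons, List.flatten_cons, List.mem_append,
          List.mem_map] at hx
        rcases hx with ⟨y, hy, rfl⟩ | hx
        · exact (hDu D (by simp)).mul (hqu y hy)
        · exact ihu x hx
      · simp only [List.zipWith_cons_cons, List.flatten_cons, List.map_cons]
        rw [zip_sum_append _ _ _ _ (by simp [hql]), zip_sum_smul_left, hqs, ihs,
          List.sum_cons]
        ring

theorem UB : ∀ n : ℕ, Odd n → ∀ L : List (ZMod n),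
    2 ^ n.primeFactorsList.length ≤ L.length → HasConsecWZS {x : ZMod n | IsUnit x} L := by
  intro n
  induction n using Nat.strong_induction_on with
  | _ n IH =>
    intro hodd L hL
    rcases eq_or_ne n 1 with rfl | hn1
    · rw [Nat.primeFactorsList_one] at hL
      simp only [List.length_nil, pow_zero] at hL
      cases L with
      | nil => simp at hL
      | cons x L' =>
        refine ⟨[], [x], L', by simp, by simp, [1], by simp, by simp, ?_⟩
        exact Subsingleton.elim _ _
    · have hn0 : n ≠ 0 := by rintro rfl; simp [Nat.odd_iff] at hodd
      obtain ⟨p, hp, pdvd⟩ : ∃ p, p.Prime ∧ p ∣ n := ⟨n.minFac, Nat.minFac_prime hn1, n.minFac_dvd⟩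
      obtain ⟨m, rfl⟩ := pdvd
      have hm0 : m ≠ 0 := by rintro rfl; simp at hn0
      have hp2 : p ≠ 2 := by
        rintro rfl
        rw [Nat.odd_iff, Nat.mul_mod_right] at hodd
        exact absurd hodd (by norm_num)
      have hmodd : Odd m := by
        rcases Nat.even_or_odd m with he | ho
        · exact absurd (he.mul_left p) (Nat.not_even_iff_odd.mpr hodd)
        · exact ho
      have hmlt : m < p * m := by
        have := Nat.mul_lt_mul_of_pos_right hp.one_lt (Nat.pos_of_ne_zero hm0)
        simpa using this
      have hΩ : (p * m).primeFactorsList.length = m.primeFactorsList.length + 1 := by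
        have hperm := Nat.perm_primeFactorsList_mul hp.ne_zero hm0
        rw [hperm.length_eq, List.length_append, Nat.primeFactorsList_prime hp]
        simp [Nat.add_comm]
      set t := 2 ^ m.primeFactorsList.length with ht
      have hL2 : 2 * t ≤ L.length := by
        rw [hΩ, pow_succ] at hL
        omega
      set φ := ZMod.castHom (dvd_mul_right p m) (ZMod p) with hφ
      set ψ := ZMod.castHom (dvd_mul_left m p) (ZMod m) with hψ
      set f : ZMod (p * m) → Bool := fun x => decide (φ x ≠ 0) with hf
      obtain ⟨pre, cs, suf, hsplit, hgood, hcslen⟩ := chunk_final f t L hL2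
      -- per-chunk weights
      have hex : ∀ c ∈ cs, ∃ q : List (ZMod (p * m)) × ZMod (p * m),
          q.1.length = c.length ∧ (∀ x ∈ q.1, IsUnit x) ∧
          (List.zipWith (· * ·) q.1 c).sum = (p : ZMod (p * m)) * q.2 := by
        intro c hc
        obtain ⟨-, hcnt⟩ := hgood c hc
        obtain ⟨a, halen, hau, haz⟩ := chunk_weights hp hp2 hm0 c hcnt
        obtain ⟨Y, hY⟩ := pdiv hp.ne_zero hm0 _ haz
        exact ⟨(a, Y), halen, hau, hY⟩
      obtain ⟨qs, hF⟩ := pick_forall₂ _ cs hex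
      have hqslen : cs.length = qs.length := hF.length_eq
      set g : List (ZMod (p * m)) × ZMod (p * m) → ZMod m := fun q => ψ q.2 with hg
      set W : List (ZMod m) := qs.map g with hW
      have hWlen : t ≤ W.length := by
        rw [hW, List.length_map, ← hqslen]; exact hcslen
      obtain ⟨W₁, W₂, W₃, hWsplit, hW₂ne, hWzs⟩ := IH m hmlt hmodd W hWlen
      obtain ⟨d, hdlen, hdu, hdsum⟩ := hWzs
      have hdu' : ∀ x ∈ d, IsUnit x := fun x hx => hdu x hx
      -- split qs according to W split
      rw [List.append_assoc] at hWsplit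
      obtain ⟨q₁, q₂₃, rfl, hq₁, hq₂₃⟩ := map_eq_append_split g qs _ _ hWsplit
      obtain ⟨q₂, q₃, rfl, hq₂, hq₃⟩ := map_eq_append_split g q₂₃ _ _ hq₂₃
      obtain ⟨cs₁, cs₂₃, rfl, hF₁, hF₂₃⟩ := forall₂_append_split hF
      obtain ⟨cs₂, cs₃, rfl, hF₂, hF₃⟩ := forall₂_append_split hF₂₃
      -- lift the weights d to units mod p*m
      obtain ⟨Ds, hDs, hDsu⟩ := units_list_lift (dvd_mul_left m p) (mul_ne_zero hp.ne_zero hm0) d hdu'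
      have hDslen : Ds.length = cs₂.length := by
        have h1 : Ds.length = d.length := by rw [← hDs, List.length_map]
        have h2 : q₂.length = W₂.length := by rw [← hq₂, List.length_map]
        rw [h1, hdlen, ← h2, hF₂.length_eq]
      obtain ⟨hflen, hfu, hfsum⟩ := assemble (p : ZMod (p * m)) cs₂ q₂ hF₂ Ds hDslen hDsu
      set flat := (List.zipWith (fun D q => q.1.map (fun x => D * x)) Ds q₂).flatten with hflat
      set Z := (List.zipWith (· * ·) Ds (q₂.map Prod.snd)).sum with hZ
      have hψZ : ψ Z = 0 := by
        rw [hZ, map_zip_sum, hDs]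
        have : (q₂.map Prod.snd).map ψ = W₂ := by
          rw [← hq₂, List.map_map]; rfl
        rw [this]
        exact hdsum
      have hpZ : (p : ZMod (p * m)) * Z = 0 := pkill hp.ne_zero hm0 Z hψZ
      have hcs₂ne : cs₂ ≠ [] := by
        rintro rfl
        cases hF₂
        exact hW₂ne (by rw [← hq₂]; rfl)
      refine ⟨pre ++ cs₁.flatten, cs₂.flatten, cs₃.flatten ++ suf, ?_, ?_, flat, ?_, ?_, ?_⟩
      · rw [hsplit]
        simp [List.flatten_append]
      · intro h
        cases cs₂ with
        | nil => exact hcs₂ne rfl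
        | cons c cs₂' =>
          have hc : c ∈ cs₁ ++ ((c :: cs₂') ++ cs₃) := by simp
          obtain ⟨hcne, -⟩ := hgood c hc
          rw [List.flatten_cons] at h
          rcases List.append_eq_nil_iff.mp h with ⟨h1, -⟩
          exact hcne h1
      · rw [hflat, hflen]
      · intro w hw
        exact hfu w hw
      · rw [hfsum]
        exact hpZ

def seqN (n : ℕ) : List ℕ :=
  if h : n ≤ 1 then []
  else
    have : n / n.minFac < n :=
      Nat.div_lt_self (by omega) (Nat.minFac_prime (by omega)).one_lt
    (seqN (n / n.minFac)).map (fun b => n.minFac * b) ++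
      1 :: (seqN (n / n.minFac)).map (fun b => n.minFac * b)
termination_by n

lemma seqN_le_one {n : ℕ} (h : n ≤ 1) : seqN n = [] := by
  rw [seqN]; simp [h]

lemma seqN_ge_two {n : ℕ} (h : 2 ≤ n) :
    seqN n = (seqN (n / n.minFac)).map (fun b => n.minFac * b) ++
      1 :: (seqN (n / n.minFac)).map (fun b => n.minFac * b) := by
  rw [seqN]; simp [show ¬ n ≤ 1 by omega]

lemma seqN_length : ∀ n : ℕ, (seqN n).length = 2 ^ n.primeFactorsList.length - 1 := by
  intro n
  induction n using Nat.strong_induction_on with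
  | _ n IH =>
    rcases le_or_gt n 1 with h | h
    · interval_cases n
      · simp [seqN_le_one, Nat.primeFactorsList_zero]
      · simp [seqN_le_one, Nat.primeFactorsList_one]
    · have h2 : 2 ≤ n := h
      have hn1 : n ≠ 1 := by omega
      have hp : n.minFac.Prime := Nat.minFac_prime hn1
      have hlt : n / n.minFac < n := Nat.div_lt_self (by omega) hp.one_lt
      have hm0 : n / n.minFac ≠ 0 := by
        intro h0
        have := Nat.mul_div_cancel' n.minFac_dvd
        rw [h0] at this; omega
      have hΩ : n.primeFactorsList.length = (n / n.minFac).primeFactorsList.length + 1 := by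
        have hmul : n.minFac * (n / n.minFac) = n := Nat.mul_div_cancel' n.minFac_dvd
        have hperm := Nat.perm_primeFactorsList_mul hp.ne_zero hm0
        rw [hmul] at hperm
        rw [hperm.length_eq, List.length_append, Nat.primeFactorsList_prime hp]
        simp [Nat.add_comm]
      rw [seqN_ge_two h2, hΩ]
      have hIH := IH _ hlt
      have hpow : 1 ≤ 2 ^ (n / n.minFac).primeFactorsList.length := Nat.one_le_two_pow
      simp only [List.length_append, List.length_cons, List.length_map, hIH, pow_succ]
      omega

lemma lower_inner {p m : ℕ} (hp0 : p ≠ 0) (hm0 : m ≠ 0) (B : List ℕ)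
    (IHm : ¬ HasConsecWZS {x : ZMod m | IsUnit x} (B.map (fun k : ℕ => (k : ZMod m))))
    (l₂ x₁ x₃ a : List (ZMod (p * m))) (hne : l₂ ≠ [])
    (hsplit : B.map (fun b => ((p * b : ℕ) : ZMod (p * m))) = x₁ ++ (l₂ ++ x₃))
    (halen : a.length = l₂.length) (hau : ∀ w ∈ a, IsUnit w)
    (hasum : (List.zipWith (· * ·) a l₂).sum = 0) : False := by
  set ψ := ZMod.castHom (dvd_mul_left m p) (ZMod m) with hψ
  obtain ⟨s₁, s₂₃, hB, h₁, h₂₃⟩ := map_eq_append_split _ B _ _ hsplit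
  obtain ⟨s₂, s₃, hB2, h₂, h₃⟩ := map_eq_append_split _ s₂₃ _ _ h₂₃
  have hs₂ne : s₂ ≠ [] := by
    rintro rfl
    exact hne (by rw [← h₂]; rfl)
  have hl₂ : l₂ = (s₂.map (fun b => ((b : ℕ) : ZMod (p * m)))).map
      (fun x => (p : ZMod (p * m)) * x) := by
    rw [← h₂, List.map_map]
    apply List.map_congr_left
    intro b _
    push_cast
    rfl
  set Z := (List.zipWith (· * ·) a (s₂.map (fun b => ((b : ℕ) : ZMod (p * m))))).sum with hZ
  have hpZ : (p : ZMod (p * m)) * Z = 0 := by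
    rw [hZ, ← zip_sum_smul_right, ← hl₂]
    exact hasum
  have hψZ := pkill' hp0 hm0 Z hpZ
  rw [hZ, map_zip_sum] at hψZ
  have hmap : (s₂.map (fun b => ((b : ℕ) : ZMod (p * m)))).map ψ
      = s₂.map (fun k : ℕ => (k : ZMod m)) := by
    rw [List.map_map]
    apply List.map_congr_left
    intro b _
    simp [hψ]
  rw [hmap] at hψZ
  apply IHm
  refine ⟨s₁.map (fun k : ℕ => (k : ZMod m)), s₂.map (fun k : ℕ => (k : ZMod m)),
    s₃.map (fun k : ℕ => (k : ZMod m)), ?_, ?_, a.map ψ, ?_, ?_, hψZ⟩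
  · rw [hB, hB2]
    simp
  · simpa using hs₂ne
  · rw [List.length_map, List.length_map, halen, ← h₂, List.length_map]
  · intro w hw
    simp only [List.mem_map] at hw
    obtain ⟨y, hy, rfl⟩ := hw
    exact (hau y hy).map ψ

theorem LB : ∀ n : ℕ, Odd n →
    ¬ HasConsecWZS {x : ZMod n | IsUnit x} ((seqN n).map (fun k : ℕ => (k : ZMod n))) := by
  intro n
  induction n using Nat.strong_induction_on with
  | _ n IH =>
    intro hodd hcon
    rcases eq_or_ne n 1 with rfl | hn1
    · obtain ⟨l₁, l₂, l₃, hsp, hne, -⟩ := hcon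
      rw [seqN_le_one le_rfl] at hsp
      simp only [List.map_nil] at hsp
      rcases List.append_eq_nil_iff.mp hsp.symm with ⟨h2, -⟩
      rcases List.append_eq_nil_iff.mp h2 with ⟨-, h3⟩
      exact hne h3
    · have hn0 : n ≠ 0 := by rintro rfl; simp [Nat.odd_iff] at hodd
      obtain ⟨p, m, hp, hpm, hpmin⟩ : ∃ p m, p.Prime ∧ p * m = n ∧ n.minFac = p := by
        refine ⟨n.minFac, n / n.minFac, Nat.minFac_prime hn1, Nat.mul_div_cancel' n.minFac_dvd, rfl⟩
      subst hpm
      have hm0 : m ≠ 0 := by rintro rfl; simp at hn0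
      have hmodd : Odd m := by
        rcases Nat.even_or_odd m with he | ho
        · exact absurd (he.mul_left p) (Nat.not_even_iff_odd.mpr hodd)
        · exact ho
      have hmlt : m < p * m := by
        have := Nat.mul_lt_mul_of_pos_right hp.one_lt (Nat.pos_of_ne_zero hm0)
        simpa using this
      have h2n : 2 ≤ p * m := by
        rcases Nat.lt_or_ge (p * m) 2 with h | h
        · interval_cases h' : (p * m) <;> simp_all
        · exact h
      have hdiv : (p * m) / (p * m).minFac = m := by
        rw [hpmin]
        exact Nat.mul_div_cancel_left m hp.pos
      have hseq : seqN (p * m) = (seqN m).map (fun b => p * b) ++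
          1 :: (seqN m).map (fun b => p * b) := by
        rw [seqN_ge_two h2n, hdiv, hpmin]
      set R := ZMod (p * m)
      set gg : ℕ → R := fun b : ℕ => ((p * b : ℕ) : R) with hgg
      set Abar : List R := (seqN m).map gg with hAbardef
      set L : List R := (seqN (p * m)).map (fun k : ℕ => (k : R)) with hLdef
      have hL : L = Abar ++ (1 : R) :: Abar := by
        rw [hLdef, hseq]
        simp [List.map_map, hAbardef, hgg, Function.comp_def]
      haveI : Fact p.Prime := ⟨hp⟩
      set φ := ZMod.castHom (dvd_mul_right p m) (ZMod p) with hφ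
      have hAbar0 : ∀ x ∈ Abar, φ x = 0 := by
        intro x hx
        rw [hAbardef] at hx
        simp only [List.mem_map] at hx
        obtain ⟨b, -, rfl⟩ := hx
        rw [hgg]
        simp only [map_natCast]
        push_cast
        rw [ZMod.natCast_self]
        ring
      have IHm := IH m hmlt hmodd
      obtain ⟨l₁, l₂, l₃, hsp, hne, a, halen, hau, hasum⟩ := hcon
      have hau' : ∀ w ∈ a, IsUnit w := fun w hw => hau w hw
      set N := Abar.length with hN
      set k1 := l₁.length with hk1
      set k2 := l₂.length with hk2
      rcases le_or_gt (k1 + k2) N with hA | hA'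
      · -- block inside left copy
        have htake : l₁ ++ l₂ = Abar.take (k1 + k2) := by
          have t1 : L.take (k1 + k2) = l₁ ++ l₂ := by
            rw [hsp]
            exact List.take_left' (by simp [hk1, hk2])
          have t2 : L.take (k1 + k2) = Abar.take (k1 + k2) := by
            rw [hL, List.take_append]
            have h0 : k1 + k2 - Abar.length = 0 := by omega
            rw [h0]
            simp
          rw [← t1, t2]
        have hAbarsplit : (seqN m).map gg = l₁ ++ (l₂ ++ Abar.drop (k1 + k2)) := by
          rw [← hAbardef]
          conv_lhs => rw [← List.take_append_drop (k1 + k2) Abar]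
          rw [← htake, List.append_assoc]
        exact lower_inner hp.ne_zero hm0 (seqN m) IHm l₂ l₁ (Abar.drop (k1 + k2)) a hne
          hAbarsplit halen hau' hasum
      · rcases le_or_gt (N + 1) k1 with hB | hC
        · -- block inside right copy
          have hd1 : L.drop k1 = l₂ ++ l₃ := by
            rw [hsp, List.append_assoc]
            exact List.drop_left' rfl
          have hd2 : L.drop k1 = Abar.drop (k1 - (N + 1)) := by
            have hL' : L = (Abar ++ [(1 : R)]) ++ Abar := by rw [hL]; simp
            rw [hL', List.drop_append]
            have e1 : (Abar ++ [(1 : R)]).drop k1 = [] :=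
              List.drop_eq_nil_of_le (by simp; omega)
            have e2 : k1 - (Abar ++ [(1 : R)]).length = k1 - (N + 1) := by simp [hN]
            rw [e1, e2]
            simp
          have hAbarsplit : (seqN m).map gg = Abar.take (k1 - (N + 1)) ++ (l₂ ++ l₃) := by
            rw [← hAbardef]
            conv_lhs => rw [← List.take_append_drop (k1 - (N + 1)) Abar]
            rw [← hd2, hd1]
          exact lower_inner hp.ne_zero hm0 (seqN m) IHm l₂ (Abar.take (k1 - (N + 1))) l₃ a hne
            hAbarsplit halen hau' hasum
        · -- block contains the middle 1
          set F : R → Bool := fun x => decide (φ x ≠ 0) with hFdef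
          have hdN : L.drop N = (1 : R) :: Abar := by
            rw [hL]
            exact List.drop_left' rfl
          have hdN2 : L.drop N = l₂.drop (N - k1) ++ l₃ := by
            rw [hsp, List.drop_append, List.drop_append]
            have e1 : l₁.drop N = [] := List.drop_eq_nil_of_le (by omega)
            have e2 : N - (l₁ ++ l₂).length = 0 := by simp; omega
            rw [e1, e2]
            simp [hk1]
          have hmem : (1 : R) ∈ l₂ := by
            rw [hdN] at hdN2
            cases hdj : l₂.drop (N - k1) with
            | nil =>
              have hlen : (l₂.drop (N - k1)).length = k2 - (N - k1) := by simp [hk2]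
              rw [hdj] at hlen
              simp at hlen
              omega
            | cons hd tl =>
              rw [hdj] at hdN2
              have hhd : hd = 1 := by
                rw [List.cons_append] at hdN2
                injection hdN2 with h1 h2
                exact h1.symm
              subst hhd
              exact List.mem_of_mem_drop (by rw [hdj]; exact List.mem_cons_self)
          obtain ⟨u, v, huv⟩ := List.append_of_mem hmem
          have hF1 : F (1 : R) = true := by
            simp [hFdef]
          have hcntAbar : Abar.countP F = 0 := List.countP_eq_zero.mpr (fun x hx => by
            simp [hFdef, hAbar0 x hx])
          have hcntL : L.countP F = 1 := by
            rw [hL]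
            simp [List.countP_append, List.countP_cons, hcntAbar, hF1]
          have hcntsp : l₁.countP F + (l₂.countP F + l₃.countP F) = 1 := by
            rw [hsp] at hcntL
            simpa [List.countP_append] using hcntL
          have hl₂c : l₂.countP F = u.countP F + (v.countP F + 1) := by
            rw [huv]
            simp [List.countP_append, List.countP_cons, hF1]
          have hu0 : ∀ x ∈ u, φ x = 0 := by
            intro x hx
            have hcu : u.countP F = 0 := by omega
            have := List.countP_eq_zero.mp hcu x hx
            simpa [hFdef] using this
          have hv0 : ∀ x ∈ v, φ x = 0 := by
            intro x hx
            have hcv : v.countP F = 0 := by omega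
            have := List.countP_eq_zero.mp hcv x hx
            simpa [hFdef] using this
          have halen' : a.length = u.length + (v.length + 1) := by
            rw [halen, hk2, huv]
            simp only [List.length_append, List.length_cons]
          have hrest : (a.drop u.length).length = v.length + 1 := by
            simp [List.length_drop, halen']
          cases hrc : a.drop u.length with
          | nil => rw [hrc] at hrest; simp at hrest
          | cons w av =>
            have haeq : a = a.take u.length ++ w :: av := by
              rw [← hrc]
              exact (List.take_append_drop _ a).symm
            have haulen : (a.take u.length).length = u.length := by
              simp [List.length_take]
              omega
            have hwu : IsUnit w := hau' w (by rw [haeq]; simp)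
            rw [huv, haeq] at hasum
            have hφ0 : φ ((List.zipWith (· * ·) (a.take u.length ++ w :: av) (u ++ 1 :: v)).sum) = 0 := by
              rw [hasum, map_zero]
            rw [map_zip_sum] at hφ0
            simp only [List.map_append, List.map_cons, map_one] at hφ0
            rw [zip_sum_append _ _ _ _ (by simp [List.length_take]; omega), List.zipWith_cons_cons,
              List.sum_cons] at hφ0
            rw [zip_sum_zero_right _ _ (by
              intro x hx
              simp only [List.mem_map] at hx
              obtain ⟨y, hy, rfl⟩ := hx
              exact hu0 y hy)] at hφ0
            rw [zip_sum_zero_right _ _ (by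
              intro x hx
              simp only [List.mem_map] at hx
              obtain ⟨y, hy, rfl⟩ := hx
              exact hv0 y hy)] at hφ0
            have : φ w = 0 := by
              rw [mul_one] at hφ0
              linear_combination hφ0
            exact (hwu.map φ).ne_zero this

/-- For odd `n`, `C_{U(n)}(n) = 2^{Ω(n)}`. -/
theorem C_units_eq_odd (n : ℕ) (hodd : Odd n) :
    (∀ L : List (ZMod n), L.length = 2 ^ n.primeFactorsList.length →
      HasConsecWZS {x : ZMod n | IsUnit x} L) ∧
    (∃ L : List (ZMod n), L.length = 2 ^ n.primeFactorsList.length - 1 ∧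
      ¬ HasConsecWZS {x : ZMod n | IsUnit x} L) := by
  constructor
  · intro L hlen
    exact UB n hodd L (le_of_eq hlen.symm)
  · refine ⟨(seqN n).map (fun k : ℕ => (k : ZMod n)), ?_, LB n hodd⟩
    rw [List.length_map, seqN_length]
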